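/- Let H_n denote the n-th harmonic number. For any γ̄ > 0 and integer M ≥ 1, define L(γ̄) = M·∑_{k=0}^{2M−1} C(2M−1,k)·((−1)^k/((1+k)·ln 2))·exp((1+k)/γ̄)·E₁((1+k)/γ̄). Then lim_{γ̄→0⁺} L(γ̄)/γ̄ = H_{2M}/(2·ln 2). -/

import Mathlib

noncomputable def H (n : ℕ) : ℝ := ∑ k ∈ Finset.Icc 1 n, (1 : ℝ) / k

noncomputable def E1 (y : ℝ) : ℝ := ∫ t in Set.Ioi (1 : ℝ), Real.exp (-y * t) / t

open MeasureTheory Real Set Filter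

lemma integral_exp_neg_mul_Ioi_one {b : ℝ} (hb : 0 < b) :
    ∫ t in Set.Ioi (1 : ℝ), Real.exp (-(b * t)) = Real.exp (-b) / b := by
  have h := integral_comp_mul_left_Ioi (fun x => Real.exp (-x)) 1 hb
  simp only [mul_one, smul_eq_mul] at h
  rw [h, integral_exp_neg_Ioi]
  ring

lemma integrableOn_exp_neg_mul_Ioi_one {b : ℝ} (hb : 0 < b) :
    IntegrableOn (fun t => Real.exp (-(b * t))) (Set.Ioi (1 : ℝ)) := by
  simpa [neg_mul] using exp_neg_integrableOn_Ioi 1 hb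

lemma E1_integrand_meas (y : ℝ) :
    AEStronglyMeasurable (fun t => Real.exp (-y * t) / t)
      (volume.restrict (Set.Ioi (1 : ℝ))) := by
  apply ContinuousOn.aestronglyMeasurable _ measurableSet_Ioi
  apply ContinuousOn.div
  · exact (Real.continuous_exp.comp (continuous_const.mul continuous_id)).continuousOn
  · exact continuousOn_id
  · intro t ht
    exact ne_of_gt (lt_trans one_pos ht)

lemma E1_integrableOn {y : ℝ} (hy : 0 < y) :
    IntegrableOn (fun t => Real.exp (-y * t) / t) (Set.Ioi (1 : ℝ)) := by
  apply Integrable.mono' (integrableOn_exp_neg_mul_Ioi_one hy) (E1_integrand_meas y)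
  filter_upwards [ae_restrict_mem measurableSet_Ioi] with t ht
  have ht0 : (0 : ℝ) < t := lt_trans one_pos ht
  rw [Real.norm_eq_abs, abs_of_nonneg (div_nonneg (Real.exp_pos _).le ht0.le), neg_mul]
  exact div_le_self (Real.exp_pos _).le (le_of_lt ht)

lemma E1_le {y : ℝ} (hy : 0 < y) : E1 y ≤ Real.exp (-y) / y := by
  rw [E1, ← integral_exp_neg_mul_Ioi_one hy]
  apply setIntegral_mono_on (E1_integrableOn hy) (integrableOn_exp_neg_mul_Ioi_one hy)
    measurableSet_Ioi
  intro t ht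
  rw [neg_mul]
  exact div_le_self (Real.exp_pos _).le (le_of_lt ht)

lemma le_E1 {y : ℝ} (hy : 0 < y) : Real.exp (-y) / (y + 1) ≤ E1 y := by
  have key : ∫ t in Set.Ioi (1 : ℝ), Real.exp 1 * Real.exp (-((y + 1) * t))
      = Real.exp (-y) / (y + 1) := by
    rw [MeasureTheory.integral_const_mul, integral_exp_neg_mul_Ioi_one (by linarith : 0 < y + 1),
      ← mul_div_assoc, ← Real.exp_add]
    ring_nf
  rw [E1, ← key]
  apply setIntegral_mono_on
    ((integrableOn_exp_neg_mul_Ioi_one (by linarith : 0 < y + 1)).const_mul _)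
    (E1_integrableOn hy) measurableSet_Ioi
  intro t ht
  have ht0 : (0 : ℝ) < t := lt_trans one_pos ht
  rw [le_div_iff₀ ht0]
  have h1 : t ≤ Real.exp (t - 1) := by
    have := Real.add_one_le_exp (t - 1)
    linarith
  calc Real.exp 1 * Real.exp (-((y + 1) * t)) * t
      ≤ Real.exp 1 * Real.exp (-((y + 1) * t)) * Real.exp (t - 1) := by
        apply mul_le_mul_of_nonneg_left h1 (by positivity)
    _ = Real.exp (-y * t) := by
        rw [← Real.exp_add, ← Real.exp_add]; ring_nf

lemma tendsto_expE1 {c : ℝ} (hc : 0 < c) :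
    Tendsto (fun γ : ℝ => Real.exp (c / γ) * E1 (c / γ) / γ)
      (nhdsWithin 0 (Set.Ioi 0)) (nhds (1 / c)) := by
  have hlow : Tendsto (fun γ : ℝ => 1 / (c + γ)) (nhdsWithin 0 (Set.Ioi 0)) (nhds (1 / c)) := by
    have : Tendsto (fun γ : ℝ => 1 / (c + γ)) (nhds 0) (nhds (1 / (c + 0))) := by
      apply Tendsto.div tendsto_const_nhds (tendsto_const_nhds.add tendsto_id)
      linarith
    simpa using this.mono_left nhdsWithin_le_nhds
  apply tendsto_of_tendsto_of_tendsto_of_le_of_le' hlow tendsto_const_nhds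
  · filter_upwards [self_mem_nhdsWithin] with γ (hγ : 0 < γ)
    have hy : 0 < c / γ := div_pos hc hγ
    have h1 := le_E1 hy
    have hee : Real.exp (-(c / γ)) * Real.exp (c / γ) = 1 := by
      rw [← Real.exp_add]; simp
    have hγ' : γ ≠ 0 := ne_of_gt hγ
    have hden : c / γ + 1 ≠ 0 := by positivity
    have h2 : Real.exp (-(c / γ)) / (c / γ + 1) * Real.exp (c / γ) / γ
        = 1 / (c + γ) := by
      have hx : (c / γ + 1) * γ = c + γ := by field_simp
      rw [div_mul_eq_mul_div, hee, div_div, hx]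
    calc 1 / (c + γ) = Real.exp (-(c / γ)) / (c / γ + 1) * Real.exp (c / γ) / γ := h2.symm
      _ ≤ Real.exp (c / γ) * E1 (c / γ) / γ := by
          apply (div_le_div_iff_of_pos_right hγ).mpr
          rw [mul_comm (Real.exp (c / γ))]
          exact mul_le_mul_of_nonneg_right h1 (Real.exp_pos _).le
  · filter_upwards [self_mem_nhdsWithin] with γ (hγ : 0 < γ)
    have hy : 0 < c / γ := div_pos hc hγ
    have h1 := E1_le hy
    have hee : Real.exp (-(c / γ)) * Real.exp (c / γ) = 1 := by
      rw [← Real.exp_add]; simp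
    have hγ' : γ ≠ 0 := ne_of_gt hγ
    have h2 : Real.exp (-(c / γ)) / (c / γ) * Real.exp (c / γ) / γ = 1 / c := by
      have hx : c / γ * γ = c := by field_simp
      rw [div_mul_eq_mul_div, hee, div_div, hx]
    calc Real.exp (c / γ) * E1 (c / γ) / γ
        ≤ Real.exp (-(c / γ)) / (c / γ) * Real.exp (c / γ) / γ := by
          apply (div_le_div_iff_of_pos_right hγ).mpr
          rw [mul_comm (Real.exp (c / γ))]
          exact mul_le_mul_of_nonneg_right h1 (Real.exp_pos _).le
      _ = 1 / c := h2

lemma alt_harmonic (n : ℕ) (hn : 1 ≤ n) :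
    ∑ k ∈ Finset.range n, (Nat.choose n (k + 1) : ℝ) * (-1) ^ k / (k + 1) = H n := by
  induction n with
  | zero => omega
  | succ m ih =>
    rcases Nat.eq_or_lt_of_le hn with h | h
    · simp [← h, H]
    · have hm : 1 ≤ m := by omega
      have step : ∀ k ∈ Finset.range (m + 1),
          (Nat.choose (m + 1) (k + 1) : ℝ) * (-1) ^ k / (k + 1)
          = (Nat.choose m (k + 1) : ℝ) * (-1) ^ k / (k + 1)
            + (Nat.choose m k : ℝ) * (-1) ^ k / (k + 1) := by
        intro k _
        rw [Nat.choose_succ_succ, Nat.cast_add]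
        ring
      rw [Finset.sum_congr rfl step, Finset.sum_add_distrib]
      have hA : ∑ k ∈ Finset.range (m + 1), (Nat.choose m (k + 1) : ℝ) * (-1) ^ k / (k + 1)
          = ∑ k ∈ Finset.range m, (Nat.choose m (k + 1) : ℝ) * (-1) ^ k / (k + 1) := by
        rw [Finset.sum_range_succ, Nat.choose_succ_self]
        simp
      have hB : ∑ k ∈ Finset.range (m + 1), (Nat.choose m k : ℝ) * (-1) ^ k / (k + 1)
          = 1 / (m + 1) := by
        have hterm : ∀ k ∈ Finset.range (m + 1),
            (Nat.choose m k : ℝ) * (-1) ^ k / (k + 1)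
            = (1 / (m + 1)) * ((-1) ^ k * (Nat.choose (m + 1) (k + 1) : ℝ)) := by
          intro k _
          have h := Nat.add_one_mul_choose_eq m k
          have h' : ((m + 1 : ℕ) : ℝ) * (Nat.choose m k : ℝ)
              = (Nat.choose (m + 1) (k + 1) : ℝ) * ((k + 1 : ℕ) : ℝ) := by
            exact_mod_cast congrArg (Nat.cast : ℕ → ℝ) h
          push_cast at h'
          have hk1 : ((k : ℝ) + 1) ≠ 0 := by positivity
          have hm1 : ((m : ℝ) + 1) ≠ 0 := by positivity
          field_simp
          linear_combination h'
        rw [Finset.sum_congr rfl hterm, ← Finset.mul_sum]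
        have halt : ∑ k ∈ Finset.range (m + 1), (-1 : ℝ) ^ k * (Nat.choose (m + 1) (k + 1) : ℝ)
            = 1 := by
          have h0 : ∑ j ∈ Finset.range (m + 2), (-1 : ℤ) ^ j * (Nat.choose (m + 1) j : ℤ) = 0 :=
            Int.alternating_sum_range_choose_of_ne (by omega)
          have h1 : ∑ j ∈ Finset.range (m + 2), (-1 : ℝ) ^ j * (Nat.choose (m + 1) j : ℝ)
              = 0 := by exact_mod_cast h0
          rw [Finset.sum_range_succ'] at h1
          have h2 : ∑ j ∈ Finset.range (m + 1), (-1 : ℝ) ^ (j + 1) * (Nat.choose (m + 1) (j + 1) : ℝ)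
              = -1 := by
            simp only [pow_zero, one_mul, Nat.choose_zero_right, Nat.cast_one] at h1
            linarith
          have h3 : ∀ j ∈ Finset.range (m + 1),
              (-1 : ℝ) ^ j * (Nat.choose (m + 1) (j + 1) : ℝ)
              = -((-1 : ℝ) ^ (j + 1) * (Nat.choose (m + 1) (j + 1) : ℝ)) := by
            intro j _; ring
          rw [Finset.sum_congr rfl h3, Finset.sum_neg_distrib, h2]
          norm_num
        rw [halt, mul_one]
      rw [hA, hB, ih hm]
      have : H (m + 1) = H m + 1 / (m + 1) := by
        rw [H, H, Finset.sum_Icc_succ_top (by omega : 1 ≤ m + 1)]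
        push_cast
        ring
      rw [this]

lemma key_identity (n : ℕ) (hn : 1 ≤ n) :
    (n : ℝ) * ∑ k ∈ Finset.range n, (Nat.choose (n - 1) k : ℝ) * (-1) ^ k / (1 + k) ^ 2
      = H n := by
  obtain ⟨m, rfl⟩ : ∃ m, n = m + 1 := ⟨n - 1, by omega⟩
  rw [Finset.mul_sum, ← alt_harmonic (m + 1) hn]
  apply Finset.sum_congr rfl
  intro k _
  have h := Nat.add_one_mul_choose_eq m k
  have h' : ((m + 1 : ℕ) : ℝ) * (Nat.choose m k : ℝ)
      = (Nat.choose (m + 1) (k + 1) : ℝ) * ((k + 1 : ℕ) : ℝ) := by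
    exact_mod_cast congrArg (Nat.cast : ℕ → ℝ) h
  push_cast at h'
  simp only [Nat.add_sub_cancel]
  have hk1 : ((k : ℝ) + 1) ≠ 0 := by positivity
  field_simp
  linear_combination (norm := (push_cast; ring)) ((k : ℝ) + 1) * h'

theorem stmt9 (M : ℕ) (hM : 1 ≤ M) :
    Filter.Tendsto
      (fun γ : ℝ =>
        ((M : ℝ) * ∑ k ∈ Finset.range (2 * M),
            (Nat.choose (2 * M - 1) k : ℝ) * ((-1 : ℝ) ^ k / ((1 + (k : ℝ)) * Real.log 2))
              * Real.exp ((1 + (k : ℝ)) / γ) * E1 ((1 + (k : ℝ)) / γ)) / γ)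
      (nhdsWithin 0 (Set.Ioi 0)) (nhds (H (2 * M) / (2 * Real.log 2))) := by
  set n := 2 * M with hn
  have hn1 : 1 ≤ n := by omega
  -- per-term limit
  have hterm : ∀ k ∈ Finset.range n,
      Tendsto (fun γ : ℝ =>
          (Nat.choose (n - 1) k : ℝ) * ((-1 : ℝ) ^ k / ((1 + (k : ℝ)) * Real.log 2))
            * (Real.exp ((1 + (k : ℝ)) / γ) * E1 ((1 + (k : ℝ)) / γ) / γ))
        (nhdsWithin 0 (Set.Ioi 0))
        (nhds ((Nat.choose (n - 1) k : ℝ) * ((-1 : ℝ) ^ k / ((1 + (k : ℝ)) * Real.log 2))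
            * (1 / (1 + (k : ℝ))))) := by
    intro k _
    have hc : (0 : ℝ) < 1 + k := by positivity
    exact (tendsto_expE1 hc).const_mul _
  have hsum := tendsto_finset_sum (Finset.range n) hterm
  have hmain := hsum.const_mul (M : ℝ)
  have heq : (fun γ : ℝ =>
      ((M : ℝ) * ∑ k ∈ Finset.range n,
          (Nat.choose (n - 1) k : ℝ) * ((-1 : ℝ) ^ k / ((1 + (k : ℝ)) * Real.log 2))
            * Real.exp ((1 + (k : ℝ)) / γ) * E1 ((1 + (k : ℝ)) / γ)) / γ)
      = (fun γ : ℝ => (M : ℝ) * ∑ k ∈ Finset.range n,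
          (Nat.choose (n - 1) k : ℝ) * ((-1 : ℝ) ^ k / ((1 + (k : ℝ)) * Real.log 2))
            * (Real.exp ((1 + (k : ℝ)) / γ) * E1 ((1 + (k : ℝ)) / γ) / γ)) := by
    funext γ
    rw [mul_div_assoc, Finset.sum_div]
    congr 1
    apply Finset.sum_congr rfl
    intro k _
    ring
  rw [heq]
  convert hmain using 1
  -- value computation
  have hlog : Real.log 2 ≠ 0 := by
    have := Real.log_pos (by norm_num : (1:ℝ) < 2)
    linarith
  have hval : ∀ k ∈ Finset.range n,
      (Nat.choose (n - 1) k : ℝ) * ((-1 : ℝ) ^ k / ((1 + (k : ℝ)) * Real.log 2))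
          * (1 / (1 + (k : ℝ)))
      = ((Nat.choose (n - 1) k : ℝ) * (-1) ^ k / (1 + (k : ℝ)) ^ 2) / Real.log 2 := by
    intro k _
    simp only [pow_two, div_eq_mul_inv, mul_inv]
    ring
  rw [Finset.sum_congr rfl hval, ← Finset.sum_div]
  have hkey := key_identity n hn1
  have hM2 : (n : ℝ) = 2 * (M : ℝ) := by push_cast [hn]; ring
  rw [← hkey, hM2]
  field_simp
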